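/- Let F be a union-closed family with DCC on inclusion, and x ∈ U_F. If A ∪ {x} ∈ F for every minimal element A of F_x^c, then x is abundant in F (i.e., there is an injection from F_x^c into F_x). -/
import Mathlib


/-- If `F` is union-closed with DCC and `A ∪ {x} ∈ F` for every minimal member
`A` of `F_x^c`, then `x` is abundant in `F`. -/
theorem stmt_6 {α : Type*} (F : Set (Set α))
    (hUC : ∀ A ∈ F, ∀ B ∈ F, A ∪ B ∈ F)
    (hDCC : ∀ S ⊆ F, S.Nonempty → ∃ M ∈ S, ∀ B ∈ S, B ⊆ M → B = M)
    (x : α) (hx : x ∈ ⋃₀ F)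
    (hmin : ∀ A ∈ F, x ∉ A → (∀ C ∈ F, x ∉ C → C ⊆ A → C = A) → A ∪ {x} ∈ F) :
    ∃ f : {A : Set α // A ∈ F ∧ x ∉ A} → {A : Set α // A ∈ F ∧ x ∈ A},
      Function.Injective f := by
  have key : ∀ A ∈ F, x ∉ A → A ∪ {x} ∈ F := by
    intro A hA hxA
    by_contra hbad
    set T : Set (Set α) := {B | B ∈ F ∧ x ∉ B ∧ B ⊆ A ∧ B ∪ {x} ∉ F} with hT
    obtain ⟨M, hM, hMmin⟩ := hDCC T (fun B hB => hB.1) ⟨A, hA, hxA, subset_rfl, hbad⟩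
    obtain ⟨hMF, hxM, hMA, hMx⟩ := hM
    refine hMx (hmin M hMF hxM ?_)
    intro C hC hxC hCM
    have hCx : C ∪ {x} ∉ F := by
      intro hCxF
      have := hUC M hMF (C ∪ {x}) hCxF
      have : M ∪ {x} ∈ F := by
        have heq : M ∪ (C ∪ {x}) = M ∪ {x} := by
          rw [← Set.union_assoc, Set.union_eq_self_of_subset_right hCM]
        rwa [heq] at this
      exact hMx this
    exact hMmin C ⟨hC, hxC, hCM.trans hMA, hCx⟩ hCM
  refine ⟨fun A => ⟨A.1 ∪ {x}, key A.1 A.2.1 A.2.2, Or.inr rfl⟩, ?_⟩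
  rintro ⟨A, hA, hxA⟩ ⟨B, hB, hxB⟩ h
  simp only [Subtype.mk.injEq] at h ⊢
  have : (A ∪ {x}) \ {x} = (B ∪ {x}) \ {x} := by rw [h]
  simpa [Set.union_diff_right, Set.diff_singleton_eq_self hxA,
    Set.diff_singleton_eq_self hxB] using this
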